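/- Let F be a CDF with revenue curve R(w) = w(1−F(w)), and suppose R is non-increasing and F is concave on [r,∞) for some r ≥ 0. Suppose x, y ≥ r, x ≤ y, α ∈ [0,1/2), and z = αx + (1−α)y. Then 4αR(x) ≥ R(z) − 2(1−α)R(y). -/
import Mathlib


/-- Core case of the 4-approximate-convexity of the revenue curve: if `R` is
non-increasing and `F` concave on `[r, ∞)`, `x ≤ y` in `[r, ∞)`, `α ∈ [0, 1/2)`
and `z = αx + (1-α)y`, then `4αR(x) ≥ R(z) − 2(1−α)R(y)`. -/
theorem stmt3 (F : ℝ → ℝ) (hFmono : Monotone F)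
    (hF0 : ∀ w, 0 ≤ F w) (hF1 : ∀ w, F w ≤ 1)
    (R : ℝ → ℝ) (hR : ∀ w, R w = w * (1 - F w))
    (r : ℝ) (hr : 0 ≤ r)
    (hRmono : AntitoneOn R (Set.Ici r))
    (hFconc : ConcaveOn ℝ (Set.Ici r) F)
    (x y α z : ℝ) (hx : r ≤ x) (hy : r ≤ y) (hxy : x ≤ y)
    (hα0 : 0 ≤ α) (hα : α < 1 / 2)
    (hz : z = α * x + (1 - α) * y) :
    R z - 2 * (1 - α) * R y ≤ 4 * α * R x := by
  set m := (x + y) / 2 with hm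
  have hx0 : 0 ≤ x := le_trans hr hx
  have hy0 : 0 ≤ y := le_trans hr hy
  have hmr : r ≤ m := by rw [hm]; linarith
  have hxm : x ≤ m := by rw [hm]; linarith
  have hmy : m ≤ y := by rw [hm]; linarith
  have hz0 : 0 ≤ z := by rw [hz]; nlinarith
  have hzy : z ≤ y := by nlinarith
  have hzm : z ≤ x + y := by nlinarith
  have ha2 : (0:ℝ) ≤ 2 * α := by linarith
  have hb2 : (0:ℝ) ≤ 1 - 2 * α := by linarith
  have hconc := hFconc.2 (Set.mem_Ici.mpr hmr) (Set.mem_Ici.mpr hy)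
      ha2 hb2 (by ring)
  have hzeq : z = 2 * α * m + (1 - 2 * α) * y := by rw [hz, hm]; ring
  simp only [smul_eq_mul] at hconc
  rw [← hzeq] at hconc
  have hRmx : R m ≤ R x := hRmono (Set.mem_Ici.mpr hx) (Set.mem_Ici.mpr hmr) hxm
  have hRzv := hR z
  have hRyv := hR y
  have hRmv := hR m
  have hFm1 : F m ≤ 1 := hF1 m
  have hFy1 : F y ≤ 1 := hF1 y
  nlinarith [mul_le_mul_of_nonneg_left hconc hz0,
    mul_nonneg (mul_nonneg ha2 (by linarith : (0:ℝ) ≤ x + y - z)) (by linarith : (0:ℝ) ≤ 1 - F m),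
    mul_nonneg (mul_nonneg hb2 (by linarith : (0:ℝ) ≤ y - z)) (by linarith : (0:ℝ) ≤ 1 - F y),
    mul_nonneg (mul_nonneg ha2 hy0) (by linarith : (0:ℝ) ≤ 1 - F y),
    mul_nonneg ha2 (by linarith : (0:ℝ) ≤ R x - R m)]
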